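/- For even n, the first player wins Building Nim BN(n,3) if and only if n is not of the form 2^k − 2 for any positive integer k; formally, for n even, BNwins (fun _ : Fin 3 => 0) n ↔ ¬ ∃ k ≥ 1, n = 2^k − 2. -/

import Mathlib

instance : Std.Commutative (fun x y : ℕ => x ^^^ y) := ⟨Nat.xor_comm⟩
instance : Std.Associative (fun x y : ℕ => x ^^^ y) := ⟨Nat.xor_assoc⟩

/-- `BNwins s r` holds iff the player to move wins Building Nim from position `s`
(the stack heights) with `r` tokens remaining to be placed. When no tokens remain,
Nim play starts, and by Bouton's theorem the player to move wins iff the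
Nim-sum (bitwise XOR) of the stack heights is nonzero. -/
def BNwins {ℓ : ℕ} : (Fin ℓ → ℕ) → ℕ → Prop
  | s, 0 => Finset.univ.fold (fun x y : ℕ => x ^^^ y) 0 s ≠ 0
  | s, r + 1 => ∃ i : Fin ℓ, ¬ BNwins (Function.update s i (s i + 1)) r


lemma dxor00 (a b : ℕ) : (2*a) ^^^ (2*b) = 2*(a^^^b) := by
  simpa [Nat.bit] using Nat.xor_bit false a false b
lemma dxor11 (a b : ℕ) : (2*a+1) ^^^ (2*b+1) = 2*(a^^^b) := by
  simpa [Nat.bit] using Nat.xor_bit true a true b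
lemma dxor10 (a b : ℕ) : (2*a+1) ^^^ (2*b) = 2*(a^^^b)+1 := by
  simpa [Nat.bit] using Nat.xor_bit true a false b
lemma dxor01 (a b : ℕ) : (2*a) ^^^ (2*b+1) = 2*(a^^^b)+1 := by
  simpa [Nat.bit] using Nat.xor_bit false a true b

lemma xor3_mod_two (a b c : ℕ) : (a ^^^ b ^^^ c) % 2 = (a + b + c) % 2 := by
  rw [Nat.xor_mod_two_eq, Nat.add_mod, Nat.xor_mod_two_eq, ← Nat.add_mod]

lemma xor3_odd_ne_zero {a b c : ℕ} (h : (a + b + c) % 2 = 1) : a ^^^ b ^^^ c ≠ 0 := by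
  intro h0
  have := xor3_mod_two a b c
  rw [h0, h] at this
  simp at this

/-- `u ^^^ (u+1)` is of the form `2^t − 1` with `t ≥ 1`, and `u % 2^t = 2^(t-1) − 1`. -/
lemma xor_succ_form (u : ℕ) : ∃ t, 1 ≤ t ∧ u ^^^ (u+1) = 2^t - 1 ∧ u % 2^t = 2^(t-1) - 1 := by
  induction u using Nat.strong_induction_on with
  | _ u ih =>
    rcases Nat.even_or_odd u with ⟨v, hv⟩ | ⟨v, hv⟩
    · refine ⟨1, le_refl _, ?_, ?_⟩
      · have h0 : 2*v ^^^ (2*v+1) = 2*(v^^^v)+1 := dxor01 v v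
        have h2 : u = 2*v := by omega
        rw [h2]
        simpa [Nat.xor_self] using h0
      · omega
    · obtain ⟨t, ht1, ht2, ht3⟩ := ih v (by omega)
      refine ⟨t+1, by omega, ?_, ?_⟩
      · have h0 : (2*v+1) ^^^ (2*(v+1)) = 2*(v ^^^ (v+1))+1 := dxor10 v (v+1)
        rw [hv]
        have h2 : 2*v+1+1 = 2*(v+1) := by ring
        rw [h2, h0, ht2]
        have : 1 ≤ 2^t := Nat.one_le_two_pow
        have h4 : (2:ℕ)^(t+1) = 2 * 2^t := by ring
        omega
      · have hp : (2:ℕ)^(t+1) = 2 * 2^t := by ring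
        have hx : (0:ℕ) < 2^t := Nat.two_pow_pos t
        have hmod : u % 2^(t+1) = 2 * (v % 2^t) + 1 := by
          rw [hv, hp, Nat.add_mod, Nat.mul_mod_mul_left]
          have h1 : (1 : ℕ) % (2 * 2^t) = 1 := Nat.mod_eq_of_lt (by omega)
          have h2 : 2 * (v % 2 ^ t) < 2 * 2^t := by
            have := Nat.mod_lt v hx; omega
          rw [h1]
          exact Nat.mod_eq_of_lt (by omega)
        rw [hmod, ht3]
        have h9 : t + 1 - 1 = t := by omega
        rw [h9]
        have h6 : 1 ≤ (2:ℕ)^(t-1) := Nat.one_le_two_pow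
        have h7 : (2:ℕ)^(t-1+1) = 2 * 2^(t-1) := by ring
        have h8 : t - 1 + 1 = t := by omega
        have h10 := h7
        rw [h8] at h10
        omega

/-- It is impossible that all three single increments kill the xor. -/
lemma exGood (a b c : ℕ) :
    ¬(((a+1)^^^b^^^c = 0) ∧ (a^^^(b+1)^^^c = 0) ∧ (a^^^b^^^(c+1) = 0)) := by
  rintro ⟨h1, h2, h3⟩
  have e1 : (a+1)^^^b = c := xor_eq_zero_iff.mp h1
  have e2 : a^^^(b+1) = c := xor_eq_zero_iff.mp h2
  have e3 : a^^^b = c+1 := xor_eq_zero_iff.mp h3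
  have hab : a ^^^ (a+1) = b ^^^ (b+1) := by
    have h0 : ((a+1)^^^b) ^^^ (a^^^(b+1)) = 0 := by rw [e1, e2, Nat.xor_self]
    have h4 : ((a+1)^^^b) ^^^ (a^^^(b+1)) = (a ^^^ (a+1)) ^^^ (b ^^^ (b+1)) := by ac_rfl
    rw [h4] at h0
    exact xor_eq_zero_iff.mp h0
  have hac : a ^^^ (a+1) = c ^^^ (c+1) := by
    have h0 : ((a+1)^^^b) ^^^ (a^^^b) = c ^^^ (c+1) := by rw [e1, e3]
    have h4 : ((a+1)^^^b) ^^^ (a^^^b) = a ^^^ (a+1) := by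
      have : ((a+1)^^^b) ^^^ (a^^^b) = (a ^^^ (a+1)) ^^^ (b ^^^ b) := by ac_rfl
      rw [this, Nat.xor_self, Nat.xor_zero]
    rw [← h4]; exact h0
  obtain ⟨ta, hta1, hta2, hta3⟩ := xor_succ_form a
  obtain ⟨tb, htb1, htb2, htb3⟩ := xor_succ_form b
  obtain ⟨tc, htc1, htc2, htc3⟩ := xor_succ_form c
  have hpa : (1:ℕ) ≤ 2^ta := Nat.one_le_two_pow
  have hpb : (1:ℕ) ≤ 2^tb := Nat.one_le_two_pow
  have hpc : (1:ℕ) ≤ 2^tc := Nat.one_le_two_pow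
  have htab : ta = tb := by
    have h0 : (2:ℕ)^ta - 1 = 2^tb - 1 := by rw [← hta2, ← htb2, hab]
    have : (2:ℕ)^ta = 2^tb := by omega
    exact Nat.pow_right_injective (le_refl 2) this
  have htac : ta = tc := by
    have h0 : (2:ℕ)^ta - 1 = 2^tc - 1 := by rw [← hta2, ← htc2, hac]
    have : (2:ℕ)^ta = 2^tc := by omega
    exact Nat.pow_right_injective (le_refl 2) this
  subst htab
  subst htac
  set t := ta with ht
  have hlt : t - 1 < t := by omega
  have h2t : 2 ≤ (2:ℕ)^t := by
    calc (2:ℕ) = 2^1 := (pow_one 2).symm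
    _ ≤ 2^t := Nat.pow_le_pow_right (by norm_num) hta1
  have hp1 : (2:ℕ)^(t-1) < 2^t := Nat.pow_lt_pow_right (by norm_num) hlt
  have hbit_a1 : (a+1).testBit (t-1) = true := by
    have hmod : (a+1) % 2^t = 2^(t-1) := by
      have h1 : (a + 1) % 2^t = (a % 2^t + 1 % 2^t) % 2^t := Nat.add_mod a 1 (2^t)
      have h2 : (1:ℕ) % 2^t = 1 := Nat.mod_eq_of_lt (by omega)
      
      rw [h2, hta3] at h1
      rw [h1]
      have h6 : 1 ≤ (2:ℕ)^(t-1) := Nat.one_le_two_pow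
      have h3 : (2:ℕ)^(t-1) - 1 + 1 = 2^(t-1) := by omega
      rw [h3]
      exact Nat.mod_eq_of_lt hp1
    have h4 := Nat.testBit_mod_two_pow (a+1) t (t-1)
    rw [hmod, Nat.testBit_two_pow_self, decide_eq_true hlt] at h4
    simpa using h4.symm
  have hbit_lowones : ∀ u : ℕ, u % 2^t = 2^(t-1) - 1 → u.testBit (t-1) = false := by
    intro u hu
    have h4 := Nat.testBit_mod_two_pow u t (t-1)
    rw [hu, Nat.testBit_two_pow_sub_one, decide_eq_true hlt] at h4
    have h5 : decide (t-1 < t-1) = false := by simp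
    rw [h5] at h4
    simpa using h4.symm
  have hbb := hbit_lowones b htb3
  have hcc := hbit_lowones c htc3
  have hxx := congrArg (fun x => Nat.testBit x (t-1)) e1
  simp [Nat.testBit_xor, hbit_a1, hbb, hcc] at hxx

/-- If `a+b` is all ones, the addition is carry-free. -/
lemma carryfree : ∀ K a b : ℕ, a + b = 2^K - 1 → a ^^^ b = a + b := by
  intro K
  induction K with
  | zero =>
    intro a b h
    have ha : a = 0 := by omega
    have hb : b = 0 := by omega
    subst ha; subst hb; simp
  | succ K ih =>
    intro a b h
    have h2 : (2:ℕ)^(K+1) = 2*2^K := by ring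
    have h1 : 1 ≤ (2:ℕ)^K := Nat.one_le_two_pow
    rcases Nat.even_or_odd a with ⟨a', ha⟩ | ⟨a', ha⟩
    · -- a even, so b odd
      have hb : b = 2*(b/2)+1 := by omega
      set b' := b/2 with hb'
      have hsum : a' + b' = 2^K - 1 := by omega
      have := ih a' b' hsum
      rw [show a = 2*a' by omega, hb, dxor01, this]
      omega
    · have hb : b = 2*(b/2) := by omega
      set b' := b/2 with hb'
      have hsum : a' + b' = 2^K - 1 := by omega
      have := ih a' b' hsum
      rw [show a = 2*a'+1 by omega, hb, dxor10, this]
      omega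

def T : ℕ → ℕ → ℕ → ℕ → Prop
  | a, b, c, 0 => a ^^^ b ^^^ c ≠ 0
  | a, b, c, r+1 => ¬T (a+1) b c r ∨ ¬T a (b+1) c r ∨ ¬T a b (c+1) r

lemma Tzero {a b c : ℕ} : T a b c 0 ↔ a ^^^ b ^^^ c ≠ 0 := Iff.rfl
lemma Tsucc {a b c r : ℕ} :
    T a b c (r+1) ↔ (¬T (a+1) b c r ∨ ¬T a (b+1) c r ∨ ¬T a b (c+1) r) := Iff.rfl

lemma notTsucc {a b c r : ℕ} :
    ¬T a b c (r+1) ↔ (T (a+1) b c r ∧ T a (b+1) c r ∧ T a b (c+1) r) := by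
  rw [Tsucc]; tauto

lemma Tswap01 : ∀ {r a b c : ℕ}, T a b c r → T b a c r := by
  intro r
  induction r with
  | zero =>
    intro a b c h
    rw [Tzero] at h ⊢
    intro h0; apply h; rw [← h0]; ac_rfl
  | succ r ih =>
    intro a b c h
    rcases h with h | h | h
    · exact Or.inr (Or.inl (mt (fun x => ih x) h))
    · exact Or.inl (mt (fun x => ih x) h)
    · exact Or.inr (Or.inr (mt (fun x => ih x) h))

lemma Tswap12 : ∀ {r a b c : ℕ}, T a b c r → T a c b r := by
  intro r
  induction r with
  | zero =>
    intro a b c h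
    rw [Tzero] at h ⊢
    intro h0; apply h; rw [← h0]; ac_rfl
  | succ r ih =>
    intro a b c h
    rcases h with h | h | h
    · exact Or.inl (mt (fun x => ih x) h)
    · exact Or.inr (Or.inr (mt (fun x => ih x) h))
    · exact Or.inr (Or.inl (mt (fun x => ih x) h))

lemma Tswap02 {r a b c : ℕ} (h : T a b c r) : T c b a r :=
  Tswap01 (Tswap12 (Tswap01 h))
lemma Trot {r a b c : ℕ} (h : T a b c r) : T b c a r := Tswap01 (Tswap02 h)
lemma Trot' {r a b c : ℕ} (h : T a b c r) : T c a b r := Trot (Trot h)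

/-- winning by playing coordinate 1 -/
lemma win1 {a b c r : ℕ} (h1 : T (a+2) b c r) (h2 : T (a+1) (b+1) c r)
    (h3 : T (a+1) b (c+1) r) : T a b c (r+2) :=
  Or.inl (notTsucc.mpr ⟨by simpa [show a+1+1 = a+2 by ring] using h1, h2, h3⟩)

lemma win2 {a b c r : ℕ} (h1 : T (a+1) (b+1) c r) (h2 : T a (b+2) c r)
    (h3 : T a (b+1) (c+1) r) : T a b c (r+2) :=
  Or.inr (Or.inl (notTsucc.mpr ⟨h1, by simpa [show b+1+1 = b+2 by ring] using h2, h3⟩))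

lemma win3 {a b c r : ℕ} (h1 : T (a+1) b (c+1) r) (h2 : T a (b+1) (c+1) r)
    (h3 : T a b (c+2) r) : T a b c (r+2) :=
  Or.inr (Or.inr (notTsucc.mpr ⟨h1, h2, by simpa [show c+1+1 = c+2 by ring] using h3⟩))

/-- destruct a winning hypothesis at r+2 into the nine grandchildren facts (3 cases) -/
lemma Tdest {a b c r : ℕ} (h : T a b c (r+2)) :
    (T (a+2) b c r ∧ T (a+1) (b+1) c r ∧ T (a+1) b (c+1) r) ∨
    (T (a+1) (b+1) c r ∧ T a (b+2) c r ∧ T a (b+1) (c+1) r) ∨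
    (T (a+1) b (c+1) r ∧ T a (b+1) (c+1) r ∧ T a b (c+2) r) := by
  rcases h with h | h | h
  · left
    have := notTsucc.mp h
    refine ⟨by simpa [show a+1+1 = a+2 by ring] using this.1, this.2.1, this.2.2⟩
  · right; left
    have := notTsucc.mp h
    refine ⟨this.1, by simpa [show b+1+1 = b+2 by ring] using this.2.1, this.2.2⟩
  · right; right
    have := notTsucc.mp h
    refine ⟨this.1, this.2.1, by simpa [show c+1+1 = c+2 by ring] using this.2.2⟩
lemma xor3_eee (u v w : ℕ) : (2*u)^^^(2*v)^^^(2*w) = 2*(u^^^v^^^w) := by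
  rw [dxor00, dxor00]
lemma xor3_ooe (u v w : ℕ) : (2*u+1)^^^(2*v+1)^^^(2*w) = 2*(u^^^v^^^w) := by
  rw [dxor11, dxor00]
lemma xor3_oeo (u v w : ℕ) : (2*u+1)^^^(2*v)^^^(2*w+1) = 2*(u^^^v^^^w) := by
  rw [dxor10, dxor11]
lemma xor3_eoo (u v w : ℕ) : (2*u)^^^(2*v+1)^^^(2*w+1) = 2*(u^^^v^^^w) := by
  rw [dxor01, dxor11]
lemma xor3_oee (u v w : ℕ) : (2*u+1)^^^(2*v)^^^(2*w) = 2*(u^^^v^^^w)+1 := by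
  rw [dxor10, dxor10]
lemma xor3_eoe (u v w : ℕ) : (2*u)^^^(2*v+1)^^^(2*w) = 2*(u^^^v^^^w)+1 := by
  rw [dxor01, dxor10]
lemma xor3_eeo (u v w : ℕ) : (2*u)^^^(2*v)^^^(2*w+1) = 2*(u^^^v^^^w)+1 := by
  rw [dxor00, dxor01]
lemma xor3_ooo (u v w : ℕ) : (2*u+1)^^^(2*v+1)^^^(2*w+1) = 2*(u^^^v^^^w)+1 := by
  rw [dxor11, dxor01]
section PART2

lemma two_mul_ne_zero {x : ℕ} (h : x ≠ 0) : 2*x ≠ 0 := by omega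

lemma Tzero_of_odd {u v w : ℕ} (h : (u + v + w) % 2 = 1) : u ^^^ v ^^^ w ≠ 0 :=
  xor3_odd_ne_zero h

/-- P2's invariant family: third pile equals sum of first two, heading to an all-ones total. -/
lemma loseFamily : ∀ (q a b : ℕ), (∃ K, a + b + q = 2^K - 1) → ¬T a b (a+b) (2*q) := by
  intro q
  induction q with
  | zero =>
    rintro a b ⟨K, hK⟩
    rw [Nat.mul_zero, Tzero, not_not]
    have h1 : a ^^^ b = a + b := carryfree K a b (by omega)
    rw [h1, Nat.xor_self]
  | succ q ih =>
    rintro a b ⟨K, hK⟩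
    have hIH1 : ¬T (a+1) b (a+b+1) (2*q) := by
      have := ih (a+1) b ⟨K, by omega⟩
      simpa [show a+1+b = a+b+1 by ring] using this
    have hIH2 : ¬T a (b+1) (a+b+1) (2*q) := by
      have := ih a (b+1) ⟨K, by omega⟩
      simpa [show a+(b+1) = a+b+1 by ring] using this
    rw [show 2*(q+1) = 2*q+1+1 by ring, notTsucc]
    refine ⟨?_, ?_, ?_⟩
    · exact Or.inr (Or.inr hIH1)
    · exact Or.inr (Or.inr hIH2)
    · exact Or.inl hIH1
  end PART2
section PART3

/-- base-P core: from nonzero xor, some coordinate's increment keeps xor nonzero. -/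
lemma exGood' {u v w : ℕ} (h : u ^^^ v ^^^ w ≠ 0) :
    ((u+1)^^^v^^^w ≠ 0) ∨ (u^^^(v+1)^^^w ≠ 0) ∨ (u^^^v^^^(w+1) ≠ 0) := by
  by_contra hc
  push_neg at hc
  exact exGood u v w ⟨hc.1, hc.2.1, hc.2.2⟩

/-- doubled Base-P : winning with 2 tokens left from an all-even position with nonzero half-xor -/
lemma baseP {u v w : ℕ} (h : u ^^^ v ^^^ w ≠ 0) : T (2*u) (2*v) (2*w) 2 := by
  rcases exGood' h with h1 | h1 | h1
  · refine win1 (r := 0) ?_ ?_ ?_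
    · rw [Tzero, show 2*u+2 = 2*(u+1) by ring, xor3_eee]; exact two_mul_ne_zero h1
    · rw [Tzero, xor3_ooe]; exact two_mul_ne_zero h
    · rw [Tzero, xor3_oeo]; exact two_mul_ne_zero h
  · refine win2 (r := 0) ?_ ?_ ?_
    · rw [Tzero, xor3_ooe]; exact two_mul_ne_zero h
    · rw [Tzero, show 2*v+2 = 2*(v+1) by ring, xor3_eee]; exact two_mul_ne_zero h1
    · rw [Tzero, xor3_eoo]; exact two_mul_ne_zero h
  · refine win3 (r := 0) ?_ ?_ ?_
    · rw [Tzero, xor3_oeo]; exact two_mul_ne_zero h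
    · rw [Tzero, xor3_eoo]; exact two_mul_ne_zero h
    · rw [Tzero, show 2*w+2 = 2*(w+1) by ring, xor3_eee]; exact two_mul_ne_zero h1

/-- two-odd-one-even position with even half-sum: playing the even pile wins with 2 left. -/
lemma baseOdd {α β γ : ℕ} (h : (α + β + γ) % 2 = 0) :
    T (2*α+1) (2*β+1) (2*γ) 2 := by
  refine win3 (r := 0) ?_ ?_ ?_
  · rw [Tzero, show 2*α+1+1 = 2*(α+1) by ring, show 2*γ+1 = 2*γ+1 from rfl, xor3_eoo]
    exact two_mul_ne_zero (Tzero_of_odd (by omega))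
  · rw [Tzero, show 2*β+1+1 = 2*(β+1) by ring, xor3_oeo]
    exact two_mul_ne_zero (Tzero_of_odd (by omega))
  · rw [Tzero, show 2*γ+2 = 2*(γ+1) by ring, xor3_ooe]
    exact two_mul_ne_zero (Tzero_of_odd (by omega))

/-- Every position whose total is ≡ 2 mod 4 is a win with 2 tokens remaining. -/
lemma R2 (a b c : ℕ) (h : (a + b + c) % 4 = 2) : T a b c 2 := by
  rcases Nat.even_or_odd a with ⟨a', ha⟩ | ⟨a', ha⟩ <;>
    rcases Nat.even_or_odd b with ⟨b', hb⟩ | ⟨b', hb⟩ <;>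
      rcases Nat.even_or_odd c with ⟨c', hc⟩ | ⟨c', hc⟩
  · -- all even
    have hx : a' ^^^ b' ^^^ c' ≠ 0 := Tzero_of_odd (by omega)
    have := baseP hx
    rw [show a = 2*a' by omega, show b = 2*b' by omega, show c = 2*c' by omega]
    exact this
  · -- a,b even, c odd : impossible (sum odd)
    omega
  · omega
  · -- a even, b c odd
    have := baseOdd (α := b') (β := c') (γ := a') (by omega)
    have h2 := Trot' this
    rw [show a = 2*a' by omega, show b = 2*b'+1 by omega, show c = 2*c'+1 by omega]
    exact h2
  · omega
  · -- a odd, b even, c odd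
    have := baseOdd (α := c') (β := a') (γ := b') (by omega)
    have h2 := Trot this
    rw [show a = 2*a'+1 by omega, show b = 2*b' by omega, show c = 2*c'+1 by omega]
    exact h2
  · -- a b odd, c even
    have := baseOdd (α := a') (β := b') (γ := c') (by omega)
    rw [show a = 2*a'+1 by omega, show b = 2*b'+1 by omega, show c = 2*c' by omega]
    exact this
  · omega

/-- propagation: if the invariant mod-4 condition holds, the mover wins. -/
lemma Awin : ∀ (q a b c : ℕ), (a + b + c + 2*q) % 4 = 2 → T a b c (2*q+2) := by
  intro q
  induction q with
  | zero => intro a b c h; exact R2 a b c (by omega)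
  | succ q ih =>
    intro a b c h
    rw [show 2*(q+1)+2 = (2*q+2)+2 by ring]
    exact win1 (ih (a+2) b c (by omega)) (ih (a+1) (b+1) c (by omega))
      (ih (a+1) b (c+1) (by omega))

end PART3
section PART4

/-- base case of S: surplus/deficit position with two tokens left. -/
lemma baseS (a b c : ℕ) (H1 : a ^^^ (b+1) ^^^ c ≠ 0) :
    T (2*a+1) (2*b+1) (2*c) 2 := by
  by_cases hD : (a+1) ^^^ (b+1) ^^^ c = 0
  · -- play the even pile (coordinate 3)
    refine win3 (r := 0) ?_ ?_ ?_
    · rw [Tzero, show 2*a+1+1 = 2*(a+1) by ring, show (2*c+1) = 2*c+1 from rfl, xor3_eoo]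
      apply two_mul_ne_zero
      have he : a + 1 = (b+1) ^^^ c := xor_eq_zero_iff.mp (by
        rw [← Nat.xor_assoc]; exact hD)
      rw [he]
      intro h0
      have : ((b+1) ^^^ c) ^^^ b ^^^ c = (b ^^^ (b+1)) ^^^ (c ^^^ c) := by ac_rfl
      rw [h0] at this
      rw [Nat.xor_self, Nat.xor_zero] at this
      exact (mt xor_eq_zero_iff.mp (by omega)) this.symm
    · rw [Tzero, show 2*b+1+1 = 2*(b+1) by ring, xor3_oeo]
      exact two_mul_ne_zero H1
    · rw [Tzero, show 2*c+2 = 2*(c+1) by ring, xor3_ooe]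
      apply two_mul_ne_zero
      intro h0
      have hD' : (a+1) ^^^ (b+1) ^^^ c = 0 := hD
      have hodd : ((a ^^^ (a+1)) ^^^ ((b ^^^ (b+1)) ^^^ ((c+1) ^^^ c))) % 2 = 1 := by
        have p1 : (a ^^^ (a+1)) % 2 = 1 := by
          rw [Nat.xor_mod_two_eq]; omega
        have p2 : (b ^^^ (b+1)) % 2 = 1 := by
          rw [Nat.xor_mod_two_eq]; omega
        have p3 : ((c+1) ^^^ c) % 2 = 1 := by
          rw [Nat.xor_mod_two_eq]; omega
        have q1 : ((a ^^^ (a+1)) ^^^ ((b ^^^ (b+1)) ^^^ ((c+1) ^^^ c))) % 2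
            = ((a ^^^ (a+1)) + ((b ^^^ (b+1)) ^^^ ((c+1) ^^^ c))) % 2 := Nat.xor_mod_two_eq
        have q2 : ((b ^^^ (b+1)) ^^^ ((c+1) ^^^ c)) % 2
            = ((b ^^^ (b+1)) + ((c+1) ^^^ c)) % 2 := Nat.xor_mod_two_eq
        omega
      have hz : ((a ^^^ b ^^^ (c+1)) ^^^ ((a+1) ^^^ (b+1) ^^^ c)) =
          ((a ^^^ (a+1)) ^^^ ((b ^^^ (b+1)) ^^^ ((c+1) ^^^ c))) := by ac_rfl
      rw [h0, hD', Nat.xor_self] at hz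
      rw [← hz] at hodd
      simp at hodd
  · -- play the deficit pile (coordinate 2)
    refine win2 (r := 0) ?_ ?_ ?_
    · rw [Tzero, show 2*a+1+1 = 2*(a+1) by ring, show 2*b+1+1 = 2*(b+1) by ring, xor3_eee]
      exact two_mul_ne_zero hD
    · rw [Tzero, show 2*b+1+2 = 2*(b+1)+1 by ring, xor3_ooe]
      exact two_mul_ne_zero H1
    · rw [Tzero, show 2*b+1+1 = 2*(b+1) by ring, xor3_oeo]
      exact two_mul_ne_zero H1

/-- R from P and S at the same level. -/
lemma RRof (q : ℕ)
    (hP : ∀ a b c, T a b c (2*q) → T (2*a) (2*b) (2*c) (4*q+2))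
    (hS : ∀ a b c, T a (b+1) c (2*q) → T (2*a+1) (2*b+1) (2*c) (4*q+2)) :
    ∀ a b c, T (a+1) (b+1) c (2*q) → T (2*a+1) (2*b+1) (2*c) (4*q+4) := by
  intro a b c h
  rw [show 4*q+4 = (4*q+2)+2 by ring]
  refine win1 ?_ ?_ ?_
  · -- T (2a+3) (2b+1) (2c)
    have := hS (a+1) b c h
    rw [show 2*(a+1)+1 = 2*a+1+2 by ring] at this
    exact this
  · -- T (2a+2) (2b+2) (2c)
    have := hP (a+1) (b+1) c h
    rw [show 2*(a+1) = 2*a+1+1 by ring, show 2*(b+1) = 2*b+1+1 by ring] at this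
    exact this
  · -- T (2a+2) (2b+1) (2c+1)
    have := hS c b (a+1) (Tswap02 h)
    have h2 := Tswap02 this
    rw [show 2*(a+1) = 2*a+1+1 by ring] at h2
    exact h2

/-- V from P and S at the same level. -/
lemma VVof (q : ℕ)
    (hP : ∀ a b c, T a b c (2*q) → T (2*a) (2*b) (2*c) (4*q+2))
    (hS : ∀ a b c, T a (b+1) c (2*q) → T (2*a+1) (2*b+1) (2*c) (4*q+2)) :
    ∀ a b c, T (a+1) b c (2*q) → T (2*a) (2*b) (2*c) (4*q+4) := by
  intro a b c h
  rw [show 4*q+4 = (4*q+2)+2 by ring]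
  refine win1 ?_ ?_ ?_
  · -- T (2a+2) (2b) (2c)
    have := hP (a+1) b c h
    rw [show 2*(a+1) = 2*a+2 by ring] at this
    exact this
  · -- T (2a+1) (2b+1) (2c)
    have := hS b a c (Tswap01 h)
    exact Tswap01 this
  · -- T (2a+1) (2b) (2c+1)
    have := hS c a b (Tswap12 (Tswap02 h))
    -- this : T (2c+1) (2a+1) (2b)
    exact Trot this
/-- The main doubling bundle: P and S for all q, by induction on q. -/
lemma PS_bundle : ∀ q : ℕ,
    (∀ a b c, T a b c (2*q) → T (2*a) (2*b) (2*c) (4*q+2)) ∧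
    (∀ a b c, T a (b+1) c (2*q) → T (2*a+1) (2*b+1) (2*c) (4*q+2)) := by
  intro q
  induction q with
  | zero =>
    constructor
    · intro a b c h
      exact baseP (h : a ^^^ b ^^^ c ≠ 0)
    · intro a b c h
      exact baseS a b c (h : a ^^^ (b+1) ^^^ c ≠ 0)
  | succ q ih =>
    obtain ⟨hP, hS⟩ := ih
    have hR := RRof q hP hS
    have hV := VVof q hP hS
    constructor
    · -- P (q+1)
      intro a b c h
      rw [show 2*(q+1) = 2*q+2 by ring] at h
      rw [show 4*(q+1)+2 = (4*q+4)+2 by ring]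
      rcases Tdest h with ⟨C1, C2, C3⟩ | ⟨C1, C2, C3⟩ | ⟨C1, C2, C3⟩
      · refine win1 ?_ ?_ ?_
        · -- T (2a+2) (2b) (2c) via V
          have := hV (a+1) b c (by rw [show a+1+1 = a+2 by ring]; exact C1)
          rw [show 2*(a+1) = 2*a+2 by ring] at this
          exact this
        · exact hR a b c C2
        · -- T (2a+1) (2b) (2c+1) via R on coords 1,3
          have := hR a c b (Tswap12 C3)
          exact Tswap12 this
      · refine win2 ?_ ?_ ?_
        · exact hR a b c C1
        · -- T (2a) (2b+2) (2c) via V on coord 2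
          have := hV (b+1) a c (by
            have := Tswap01 C2
            rw [show b+1+1 = b+2 by ring]
            exact this)
          rw [show 2*(b+1) = 2*b+2 by ring] at this
          exact Tswap01 this
        · -- T (2a) (2b+1) (2c+1) via R on coords 2,3
          have := hR b c a (Trot C3)
          exact Trot' this
      · refine win3 ?_ ?_ ?_
        · -- T (2a+1) (2b) (2c+1)
          have := hR a c b (Tswap12 C1)
          exact Tswap12 this
        · -- T (2a) (2b+1) (2c+1)
          have := hR b c a (Trot C2)
          exact Trot' this
        · -- T (2a) (2b) (2c+2) via V on coord 3
          have := hV (c+1) b a (by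
            have := Tswap02 C3
            rw [show c+1+1 = c+2 by ring]
            exact this)
          rw [show 2*(c+1) = 2*c+2 by ring] at this
          exact Tswap02 this
    · -- S (q+1) : hyp T a (b+1) c (2q+2), goal T (2a+1) (2b+1) (2c) (4q+6)
      intro a b c h
      rw [show 2*(q+1) = 2*q+2 by ring] at h
      rw [show 4*(q+1)+2 = (4*q+4)+2 by ring]
      rcases Tdest h with ⟨C1, C2, C3⟩ | ⟨C1, C2, C3⟩ | ⟨C1, C2, C3⟩
      · -- i* = coord1 : use atom C3 = T (a+1) (b+1) (c+1), play coord 3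
        refine win3 ?_ ?_ ?_
        · -- T (2a+2) (2b+1) (2c+1) : R on coords 2,3 of base (b, c, a+1)
          have := hR b c (a+1) (Trot C3)
          have h2 := Trot' this
          rw [show 2*(a+1) = 2*a+1+1 by ring] at h2
          exact h2
        · -- T (2a+1) (2b+2) (2c+1) : R coords 1,3 on base (a, c, b+1)
          have := hR a c (b+1) (Tswap12 C3)
          have h2 := Tswap12 this
          rw [show 2*(b+1) = 2*b+1+1 by ring] at h2
          exact h2
        · -- T (2a+1) (2b+1) (2c+2) : R coords 1,2 on base (a, b, c+1)
          have := hR a b (c+1) C3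
          rw [show 2*(c+1) = 2*c+2 by ring] at this
          exact this
      · -- i* = coord2 (the deficit pile) : atoms C1 = T (a+1)(b+2) c, C2, C3 = T a (b+2) (c+1)
        refine win2 ?_ ?_ ?_
        · -- T (2a+2) (2b+2) (2c) : V on coord2 with z = (a+1, b+2, c) = C1
          have := hV (b+1) (a+1) c (by
            have := Tswap01 C1
            rw [show b+1+1 = b+2 by ring]
            exact this)
          -- this : T (2(b+1)) (2(a+1)) (2c)
          have h2 := Tswap01 this
          rw [show 2*(a+1) = 2*a+1+1 by ring, show 2*(b+1) = 2*b+1+1 by ring] at h2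
          exact h2
        · -- T (2a+1) (2b+3) (2c) : R coords 1,2 on C1
          have := hR a (b+1) c C1
          rw [show 2*(b+1)+1 = 2*b+1+2 by ring] at this
          exact this
        · -- T (2a+1) (2b+2) (2c+1) : the inline N, playing coord 2 again
          rw [show 4*q+4 = (4*q+2)+2 by ring]
          refine win2 ?_ ?_ ?_
          · -- T (2a+2) (2b+3) (2c+1) : S surplus 3 deficit 2 on base (c, b+1, a+1) from C1
            have := hS c (b+1) (a+1) (by
              have := Tswap02 C1
              rw [show b+1+1 = b+2 by ring] at this ⊢
              exact this)
            -- this : T (2c+1) (2(b+1)+1) (2(a+1))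
            have h2 := Tswap02 this
            rw [show 2*(a+1) = 2*a+1+1 by ring, show 2*(b+1)+1 = 2*b+1+1+1 by ring] at h2
            exact h2
          ·
            -- goal T (2a+1) (2b+1+1+2) (2c+1) = (2a+1, 2b+4, 2c+1)
            -- SS with (surplus c, deficit a, third b+2) on T c (a+1) (b+2) = Trot' C1
            have := hS c a (b+2) (Trot' C1)
            -- this : T (2c+1) (2a+1) (2(b+2))
            have h2 := Trot this
            rw [show 2*(b+2) = 2*b+1+1+2 by ring] at h2
            exact h2
          · -- T (2a+1) (2b+3) (2c+2) : S surplus 1 deficit 2 on base (a, b+2, c+1) = C3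
            have := hS a (b+1) (c+1) (by
              rw [show b+1+1 = b+2 by ring]
              exact C3)
            -- this : T (2a+1) (2(b+1)+1) (2(c+1))
            rw [show 2*(b+1)+1 = 2*b+1+1+1 by ring, show 2*(c+1) = 2*c+1+1 by ring] at this
            exact this
      · -- i* = coord3 : atom C1 = T (a+1) (b+1) (c+1), play coord 3 (same as first case)
        refine win3 ?_ ?_ ?_
        · have := hR b c (a+1) (Trot C1)
          have h2 := Trot' this
          rw [show 2*(a+1) = 2*a+1+1 by ring] at h2
          exact h2
        · have := hR a c (b+1) (Tswap12 C1)
          have h2 := Tswap12 this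
          rw [show 2*(b+1) = 2*b+1+1 by ring] at h2
          exact h2
        · have := hR a b (c+1) C1
          rw [show 2*(c+1) = 2*c+2 by ring] at this
          exact this
/-- P1 wins for every even n that is not of the form 2^k - 2. -/
lemma winAll : ∀ n : ℕ, n % 2 = 0 → (¬∃ k, 1 ≤ k ∧ n = 2^k - 2) → T 0 0 0 n := by
  intro n
  induction n using Nat.strong_induction_on with
  | _ n ih =>
    intro hev hno
    rcases Nat.lt_or_ge n 1 with hn0 | hn1
    · exact absurd ⟨1, le_refl 1, by omega⟩ hno
    rcases Nat.lt_or_ge n 3 with hn2 | hn3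
    · -- n = 2
      exact absurd ⟨2, by omega, by norm_num; omega⟩ hno
    by_cases h4 : n % 4 = 0
    · -- n ≡ 0 mod 4, n ≥ 4
      obtain ⟨q, hq⟩ : ∃ q, n = 2*q + 2 := ⟨(n-2)/2, by omega⟩
      have := Awin q 0 0 0 (by omega)
      rw [hq]; exact this
    · -- n ≡ 2 mod 4, n ≥ 6
      have h42 : n % 4 = 2 := by omega
      set m := (n-2)/2 with hm
      have hmn : n = 2*m + 2 := by omega
      have hm2 : m % 2 = 0 := by omega
      have hmlt : m < n := by omega
      have hnom : ¬∃ k, 1 ≤ k ∧ m = 2^k - 2 := by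
        rintro ⟨k, hk1, hkm⟩
        apply hno
        refine ⟨k+1, by omega, ?_⟩
        have h2k : (2:ℕ)^k ≥ 2 := by
          calc (2:ℕ) = 2^1 := (pow_one 2).symm
          _ ≤ 2^k := Nat.pow_le_pow_right (by norm_num) hk1
        have : (2:ℕ)^(k+1) = 2 * 2^k := by ring
        omega
      have hTm := ih m hmlt hm2 hnom
      obtain ⟨qm, hqm⟩ : ∃ qm, m = 2*qm := ⟨m/2, by omega⟩
      have := (PS_bundle qm).1 0 0 0 (by rw [← hqm]; exact hTm)
      rw [show (2*0 : ℕ) = 0 by ring] at this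
      rw [show n = 4*qm+2 by omega]
      exact this

/-- P2 wins when n = 2^k - 2. -/
lemma loseAll (n k : ℕ) (hk : 1 ≤ k) (hn : n = 2^k - 2) : ¬T 0 0 0 n := by
  have h2k : (2:ℕ)^k ≥ 2 := by
    calc (2:ℕ) = 2^1 := (pow_one 2).symm
    _ ≤ 2^k := Nat.pow_le_pow_right (by norm_num) hk
  obtain ⟨q, hq⟩ : ∃ q, n = 2*q ∧ q = 2^(k-1) - 1 := by
    refine ⟨2^(k-1)-1, ?_, rfl⟩
    have : (2:ℕ)^(k-1+1) = 2 * 2^(k-1) := by ring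
    rw [show k-1+1 = k by omega] at this
    have h1 : 1 ≤ (2:ℕ)^(k-1) := Nat.one_le_two_pow
    omega
  obtain ⟨hq1, hq2⟩ := hq
  have := loseFamily q 0 0 ⟨k-1, by omega⟩
  rw [hq1]
  simpa using this
end PART4


lemma bnwins_iff_T : ∀ (r : ℕ) (s : Fin 3 → ℕ), BNwins s r ↔ T (s 0) (s 1) (s 2) r := by
  intro r
  induction r with
  | zero =>
    intro s
    show Finset.univ.fold (fun x y : ℕ => x ^^^ y) 0 s ≠ 0 ↔ _
    have : Finset.univ.fold (fun x y : ℕ => x ^^^ y) 0 s = s 0 ^^^ (s 1 ^^^ (s 2 ^^^ 0)) := rfl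
    rw [this]
    show s 0 ^^^ (s 1 ^^^ (s 2 ^^^ 0)) ≠ 0 ↔ s 0 ^^^ s 1 ^^^ s 2 ≠ 0
    rw [Nat.xor_zero, Nat.xor_assoc]
  | succ r ih =>
    intro s
    show (∃ i : Fin 3, ¬ BNwins (Function.update s i (s i + 1)) r) ↔ _
    constructor
    · rintro ⟨i, hi⟩
      fin_cases i
      · left
        intro hT
        exact hi ((ih _).mpr (by
          simpa [Function.update_self, Function.update_of_ne, show (1:Fin 3) ≠ 0 by decide,
            show (2:Fin 3) ≠ 0 by decide] using hT))
      · right; left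
        intro hT
        exact hi ((ih _).mpr (by
          simpa [Function.update_self, Function.update_of_ne, show (0:Fin 3) ≠ 1 by decide,
            show (2:Fin 3) ≠ 1 by decide] using hT))
      · right; right
        intro hT
        exact hi ((ih _).mpr (by
          simpa [Function.update_self, Function.update_of_ne, show (0:Fin 3) ≠ 2 by decide,
            show (1:Fin 3) ≠ 2 by decide] using hT))
    · rintro (h | h | h)
      · exact ⟨0, fun hb => h (by
          simpa [Function.update_self, Function.update_of_ne, show (1:Fin 3) ≠ 0 by decide,
            show (2:Fin 3) ≠ 0 by decide] using (ih _).mp hb)⟩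
      · exact ⟨1, fun hb => h (by
          simpa [Function.update_self, Function.update_of_ne, show (0:Fin 3) ≠ 1 by decide,
            show (2:Fin 3) ≠ 1 by decide] using (ih _).mp hb)⟩
      · exact ⟨2, fun hb => h (by
          simpa [Function.update_self, Function.update_of_ne, show (0:Fin 3) ≠ 2 by decide,
            show (1:Fin 3) ≠ 2 by decide] using (ih _).mp hb)⟩

/-- For even `n`, the first player wins `BN(n, 3)` iff `n ≠ 2 ^ k - 2` for
every positive integer `k`. -/
theorem first_player_wins_three_stacks_iff (n : ℕ) (hn : Even n) :
    BNwins (fun _ : Fin 3 => 0) n ↔ ¬ ∃ k ≥ 1, n = 2 ^ k - 2 := by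
  rw [bnwins_iff_T]
  constructor
  · rintro hT ⟨k, hk, hkn⟩
    exact loseAll n k hk hkn hT
  · intro hno
    refine winAll n (Nat.even_iff.mp hn) ?_
    rintro ⟨k, hk, h⟩
    exact hno ⟨k, hk, h⟩
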